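/- Let n ≥ 1 and let η be a partition of 2n in which every even part occurs with even multiplicity (an orthogonal partition), with dual partition η̂ = (η̂₁,…,η̂_s), s = η₁. Then 2⌊(s−1)/2⌋ + (1/2)(Σ_{i=1}^{s} η̂ᵢ² − o(η)) − n − 2(n−1) ≥ 0, and equality holds if and only if η has exactly two parts (equivalently η̂₁ = 2). -/
import Mathlib


/-- The `i`-th entry of the dual partition: `η̂ᵢ = #{j : η_j ≥ i}` (parts counted with
multiplicity). -/
def dualPart {N : ℕ} (η : Nat.Partition N) (i : ℕ) : ℕ :=
  (η.parts.filter (fun j => i ≤ j)).card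

/-- The number `o(η)` of odd parts of a partition. -/
def oddCount {N : ℕ} (η : Nat.Partition N) : ℕ :=
  (η.parts.filter (fun j => Odd j)).card

lemma filter_Icc_le (s j : ℕ) (hj : j ≤ s) :
    (Finset.Icc 1 s).filter (fun i => i ≤ j) = Finset.Icc 1 j := by
  ext x; simp only [Finset.mem_filter, Finset.mem_Icc]; omega

lemma sum_ite_le (s j c : ℕ) (hj : j ≤ s) :
    ∑ i ∈ Finset.Icc 1 s, (if i ≤ j then c else 0) = j * c := by
  rw [← Finset.sum_filter, filter_Icc_le s j hj, Finset.sum_const, Nat.card_Icc]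
  simp [mul_comm]

lemma dual_eq_sum {N : ℕ} (η : Nat.Partition N) (i : ℕ) :
    dualPart η i = ∑ j ∈ η.parts.toFinset, (if i ≤ j then η.parts.count j else 0) := by
  rw [dualPart, ← Multiset.toFinset_sum_count_eq, Multiset.toFinset_filter,
    Finset.sum_filter]
  refine Finset.sum_congr rfl fun j _ => ?_
  by_cases h : i ≤ j <;> simp [h, Multiset.count_filter]

lemma dual_sum {N : ℕ} (η : Nat.Partition N) :
    ∑ i ∈ Finset.Icc 1 η.parts.sup, dualPart η i = N := by
  have h := fun i => dual_eq_sum η i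
  calc ∑ i ∈ Finset.Icc 1 η.parts.sup, dualPart η i
      = ∑ j ∈ η.parts.toFinset, ∑ i ∈ Finset.Icc 1 η.parts.sup,
          (if i ≤ j then η.parts.count j else 0) := by
        rw [← Finset.sum_comm]; exact Finset.sum_congr rfl fun i _ => h i
    _ = ∑ j ∈ η.parts.toFinset, η.parts.count j • j := by
        refine Finset.sum_congr rfl fun j hj => ?_
        rw [sum_ite_le _ _ _ (Multiset.le_sup (Multiset.mem_toFinset.mp hj))]
        simp [mul_comm]
    _ = η.parts.sum := (Finset.sum_multiset_map_count η.parts id).symm.trans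
        (by rw [Multiset.map_id])
    _ = N := η.parts_sum

lemma dual_pos {N : ℕ} (η : Nat.Partition N) {i : ℕ}
    (hi : i ∈ Finset.Icc 1 η.parts.sup) : 1 ≤ dualPart η i := by
  rw [Finset.mem_Icc] at hi
  by_contra h
  have h0 : η.parts.filter (fun j => i ≤ j) = 0 := by
    have := Nat.lt_one_iff.mp (Nat.lt_of_not_le h)
    simpa [dualPart, Multiset.card_eq_zero] using this
  have hall : ∀ j ∈ η.parts, j ≤ i - 1 := by
    intro j hj
    have : ¬ i ≤ j := by
      intro hij
      have : j ∈ η.parts.filter (fun j => i ≤ j) := Multiset.mem_filter.mpr ⟨hj, hij⟩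
      simp [h0] at this
    omega
  have := Multiset.sup_le.mpr hall
  omega

lemma dual_one {N : ℕ} (η : Nat.Partition N) :
    dualPart η 1 = Multiset.card η.parts := by
  rw [dualPart]
  exact congrArg _ (Multiset.filter_eq_self.mpr fun j hj => η.parts_pos hj)

lemma card_filter_odd_mod (m : Multiset ℕ) :
    Multiset.card (m.filter (fun j => Odd j)) % 2 = m.sum % 2 := by
  induction m using Multiset.induction_on with
  | empty => simp
  | cons a t ih =>
    rw [Multiset.filter_cons, Multiset.sum_cons, Multiset.card_add]
    by_cases h : Odd a
    · have : a % 2 = 1 := Nat.odd_iff.mp h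
      simp only [h, if_pos, Multiset.card_singleton]
      omega
    · have : a % 2 = 0 := Nat.even_iff.mp (Nat.not_odd_iff_even.mp h)
      simp only [h, if_neg, not_false_iff, Multiset.card_zero]
      omega

lemma even_card_filter_even {N : ℕ} (η : Nat.Partition N)
    (horth : ∀ j : ℕ, Even j → Even (Multiset.count j η.parts)) :
    Even (Multiset.card (η.parts.filter (fun j => Even j))) := by
  set t := η.parts.filter (fun j => Even j) with ht
  rw [← Multiset.toFinset_sum_count_eq]
  rw [Nat.even_iff, ← Nat.dvd_iff_mod_eq_zero]
  apply Finset.dvd_sum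
  intro j hj
  have hjt : j ∈ t := Multiset.mem_toFinset.mp hj
  have hje : Even j := (Multiset.mem_filter.mp hjt).2
  rw [ht, Multiset.count_filter_of_pos hje]
  exact (horth j hje).two_dvd

lemma card_parts_even (n : ℕ) (η : Nat.Partition (2 * n))
    (horth : ∀ j : ℕ, Even j → Even (Multiset.count j η.parts)) :
    Even (Multiset.card η.parts) := by
  have h1 := card_filter_odd_mod η.parts
  rw [η.parts_sum] at h1
  have h2 := even_card_filter_even η horth
  have h3 : Multiset.card (η.parts.filter (fun j => Odd j))
      + Multiset.card (η.parts.filter (fun j => ¬ Odd j)) = Multiset.card η.parts := by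
    rw [← Multiset.card_add, Multiset.filter_add_not]
  have h4 : η.parts.filter (fun j => ¬ Odd j) = η.parts.filter (fun j => Even j) := by
    apply Multiset.filter_congr
    intro j _
    exact Nat.not_odd_iff_even
  rw [h4] at h3
  rw [Nat.even_iff] at h2 ⊢
  omega

lemma oddCount_even (n : ℕ) (η : Nat.Partition (2 * n)) : Even (oddCount η) := by
  have h1 := card_filter_odd_mod η.parts
  rw [η.parts_sum] at h1
  rw [oddCount, Nat.even_iff]
  omega

lemma case_two (n : ℕ) (hn : 1 ≤ n) (η : Nat.Partition (2 * n))
    (horth : ∀ j : ℕ, Even j → Even (Multiset.count j η.parts))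
    (a b : ℕ) (hab : a ≤ b) (hparts : η.parts = {a, b}) :
    2 * (((η.parts.sup - 1) / 2 : ℕ) : ℚ)
        + (1 / 2 : ℚ) * ((∑ i ∈ Finset.Icc 1 η.parts.sup, (dualPart η i : ℚ) ^ 2)
            - (oddCount η : ℚ))
        - (n : ℚ) - 2 * ((n : ℚ) - 1) = 0 := by
  have ha1 : 1 ≤ a := η.parts_pos (by rw [hparts]; exact Multiset.mem_cons_self a _)
  have hb1 : 1 ≤ b := le_trans ha1 hab
  have hsum : a + b = 2 * n := by
    have := η.parts_sum
    rw [hparts] at this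
    simpa using this
  have hsup : η.parts.sup = b := by
    rw [hparts]
    simp only [Multiset.insert_eq_cons, Multiset.sup_cons, Multiset.sup_singleton]
    exact sup_eq_right.mpr hab
  have hd : ∀ i : ℕ, dualPart η i = (if i ≤ a then 1 else 0) + (if i ≤ b then 1 else 0) := by
    intro i
    rw [dualPart, hparts]
    rw [Multiset.insert_eq_cons, Multiset.filter_cons, Multiset.filter_singleton]
    by_cases h1 : i ≤ a <;> by_cases h2 : i ≤ b <;> simp [h1, h2]
  have hS : ∑ i ∈ Finset.Icc 1 η.parts.sup, (dualPart η i) ^ 2 = 3 * a + b := by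
    rw [hsup]
    have : ∀ i ∈ Finset.Icc 1 b, (dualPart η i) ^ 2
        = (if i ≤ a then 3 else 0) + 1 := by
      intro i hi
      have hib : i ≤ b := (Finset.mem_Icc.mp hi).2
      rw [hd i]
      by_cases h1 : i ≤ a <;> simp [h1, hib]
    rw [Finset.sum_congr rfl this, Finset.sum_add_distrib, sum_ite_le b a 3 hab,
      Finset.sum_const, Nat.card_Icc]
    simp; omega
  have hSq : (∑ i ∈ Finset.Icc 1 η.parts.sup, (dualPart η i : ℚ) ^ 2)
      = 3 * (a : ℚ) + b := by
    have : ((∑ i ∈ Finset.Icc 1 η.parts.sup, (dualPart η i) ^ 2 : ℕ) : ℚ)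
        = ∑ i ∈ Finset.Icc 1 η.parts.sup, (dualPart η i : ℚ) ^ 2 := by push_cast; rfl
    rw [← this, hS]; push_cast; ring
  have ho : oddCount η = (if Odd a then 1 else 0) + (if Odd b then 1 else 0) := by
    rw [oddCount, hparts, Multiset.insert_eq_cons, Multiset.filter_cons,
      Multiset.filter_singleton]
    by_cases h1 : Odd a <;> by_cases h2 : Odd b <;> simp [h1, h2]
  have hpar : a % 2 = b % 2 := by omega
  have hnq : (n : ℚ) = ((a : ℚ) + b) / 2 := by
    have : ((a + b : ℕ) : ℚ) = ((2 * n : ℕ) : ℚ) := by exact congrArg (Nat.cast : ℕ → ℚ) hsum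
    push_cast at this
    linarith
  by_cases hodd : Odd a
  · have hob : Odd b := by
      rw [Nat.odd_iff] at hodd ⊢; omega
    have hoval : oddCount η = 2 := by rw [ho]; simp [hodd, hob]
    have hb2 : 2 * ((b - 1) / 2) = b - 1 := by
      rw [Nat.odd_iff] at hob; omega
    have hcast : (2 : ℚ) * (((η.parts.sup - 1) / 2 : ℕ) : ℚ) = (b : ℚ) - 1 := by
      rw [hsup]
      have : ((2 * ((b - 1) / 2) : ℕ) : ℚ) = ((b - 1 : ℕ) : ℚ) := by
        exact congrArg (Nat.cast : ℕ → ℚ) hb2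
      rw [Nat.cast_mul, Nat.cast_sub hb1] at this
      push_cast at this ⊢
      linarith
    rw [hSq, hoval, hnq]
    push_cast
    linarith
  · have heva : Even a := Nat.not_odd_iff_even.mp hodd
    have hevb : Even b := by
      rw [Nat.even_iff] at heva ⊢
      omega
    have haeqb : a = b := by
      by_contra hne
      have hcnt : Multiset.count a η.parts = 1 := by
        rw [hparts, Multiset.insert_eq_cons, Multiset.count_cons_self,
          Multiset.count_singleton]
        simp [hne]
      have := horth a heva
      rw [hcnt] at this
      exact (Nat.not_even_one) this
    subst haeqb
    have hna : n = a := by omega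
    have ha2 : 2 ≤ a := by
      rw [Nat.even_iff] at heva; omega
    have hoval : oddCount η = 0 := by rw [ho]; simp [hodd]
    have hfl : 2 * ((a - 1) / 2) = a - 2 := by
      rw [Nat.even_iff] at heva; omega
    have hcast : (2 : ℚ) * (((η.parts.sup - 1) / 2 : ℕ) : ℚ) = (a : ℚ) - 2 := by
      rw [hsup]
      have : ((2 * ((a - 1) / 2) : ℕ) : ℚ) = ((a - 2 : ℕ) : ℚ) := by
        exact congrArg (Nat.cast : ℕ → ℚ) hfl
      rw [Nat.cast_mul, Nat.cast_sub ha2] at this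
      push_cast at this ⊢
      linarith
    rw [hSq, hoval, hnq]
    push_cast
    linarith

lemma case_big (n : ℕ) (hn : 1 ≤ n) (η : Nat.Partition (2 * n))
    (hr4 : 4 ≤ Multiset.card η.parts) :
    1 ≤ 2 * (((η.parts.sup - 1) / 2 : ℕ) : ℚ)
        + (1 / 2 : ℚ) * ((∑ i ∈ Finset.Icc 1 η.parts.sup, (dualPart η i : ℚ) ^ 2)
            - (oddCount η : ℚ))
        - (n : ℚ) - 2 * ((n : ℚ) - 1) := by
  set s := η.parts.sup with hs
  set r := Multiset.card η.parts with hrdef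
  -- parts nonempty, sup at least 1
  have hne : η.parts ≠ 0 := by
    intro h
    rw [hrdef, h] at hr4
    simp at hr4
  obtain ⟨j, hj⟩ := Multiset.exists_mem_of_ne_zero hne
  have hs1 : 1 ≤ s := le_trans (η.parts_pos hj) (Multiset.le_sup hj)
  -- sum of dual parts
  have hA : ∑ i ∈ Finset.Icc 1 s, dualPart η i = 2 * n := dual_sum η
  -- split off i = 1
  have hnotmem : (1 : ℕ) ∉ Finset.Icc 2 s := by simp
  have hIcc : Finset.Icc 1 s = insert 1 (Finset.Icc 2 s) := by
    ext x
    simp only [Finset.mem_Icc, Finset.mem_insert]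
    omega
  have hd1 : dualPart η 1 = r := dual_one η
  -- linear sum over the tail
  have hAq : (∑ i ∈ Finset.Icc 1 s, (dualPart η i : ℚ)) = 2 * n := by
    have : ((∑ i ∈ Finset.Icc 1 s, dualPart η i : ℕ) : ℚ)
        = ∑ i ∈ Finset.Icc 1 s, (dualPart η i : ℚ) := by push_cast; rfl
    rw [← this, hA]; push_cast; ring
  have htail : (∑ i ∈ Finset.Icc 2 s, (dualPart η i : ℚ)) = 2 * n - r := by
    rw [hIcc, Finset.sum_insert hnotmem, hd1] at hAq
    linarith
  -- quadratic bound on the tail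
  have hbound : ∀ i ∈ Finset.Icc 2 s,
      3 * (dualPart η i : ℚ) - 2 ≤ (dualPart η i : ℚ) ^ 2 := by
    intro i hi
    have hmem : i ∈ Finset.Icc 1 s := by
      rw [Finset.mem_Icc] at hi ⊢; omega
    have h1 := dual_pos η hmem
    rcases Nat.lt_or_ge (dualPart η i) 2 with h | h
    · have : dualPart η i = 1 := by omega
      rw [this]; norm_num
    · have h2 : (2 : ℚ) ≤ (dualPart η i : ℚ) := by exact_mod_cast h
      nlinarith
  have hsumb : ∑ i ∈ Finset.Icc 2 s, (3 * (dualPart η i : ℚ) - 2)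
      ≤ ∑ i ∈ Finset.Icc 2 s, (dualPart η i : ℚ) ^ 2 :=
    Finset.sum_le_sum hbound
  have hcard2 : ((Finset.Icc 2 s).card : ℚ) = (s : ℚ) - 1 := by
    rw [Nat.card_Icc]
    have : s + 1 - 2 = s - 1 := by omega
    rw [this, Nat.cast_sub hs1]
    push_cast; ring
  have hlhs : ∑ i ∈ Finset.Icc 2 s, (3 * (dualPart η i : ℚ) - 2)
      = 3 * (2 * n - r) - 2 * ((s : ℚ) - 1) := by
    rw [Finset.sum_sub_distrib, ← Finset.mul_sum, htail, Finset.sum_const, nsmul_eq_mul, hcard2]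
    push_cast; ring
  -- square sum split
  have hSsplit : (∑ i ∈ Finset.Icc 1 s, (dualPart η i : ℚ) ^ 2)
      = (r : ℚ) ^ 2 + ∑ i ∈ Finset.Icc 2 s, (dualPart η i : ℚ) ^ 2 := by
    rw [hIcc, Finset.sum_insert hnotmem, hd1]
  -- floor bound
  have hflnat : s ≤ 2 * ((s - 1) / 2) + 2 := by omega
  have hfl : (s : ℚ) - 2 ≤ 2 * (((s - 1) / 2 : ℕ) : ℚ) := by
    have : ((s : ℕ) : ℚ) ≤ ((2 * ((s - 1) / 2) + 2 : ℕ) : ℚ) := by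
      exact_mod_cast hflnat
    push_cast at this
    linarith
  -- odd count at most r
  have hole : (oddCount η : ℚ) ≤ (r : ℚ) := by
    have : oddCount η ≤ r := Multiset.card_le_card (Multiset.filter_le _ _)
    exact_mod_cast this
  have hr4q : (4 : ℚ) ≤ (r : ℚ) := by exact_mod_cast hr4
  nlinarith [hsumb, hlhs, hSsplit, hfl, hole, hr4q,
    mul_nonneg (sub_nonneg.mpr hr4q) (by positivity : (0:ℚ) ≤ (r : ℚ))]


/-- the Z₂-grading `(so_{2n}, S²₀)` case. Let `n ≥ 1` and let `η`
be an orthogonal partition of `2n` (every even part occurs with even multiplicity),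
with dual partition `η̂ = (η̂₁,…,η̂_s)`, `s = η₁`. Then
`2⌊(s−1)/2⌋ + (1/2)(Σ η̂ᵢ² − o(η)) − n − 2(n−1) ≥ 0`, with equality iff `η` has
exactly two parts (equivalently `η̂₁ = 2`). -/
theorem so_even_inequality (n : ℕ) (hn : 1 ≤ n) (η : Nat.Partition (2 * n))
    (horth : ∀ j : ℕ, Even j → Even (Multiset.count j η.parts)) :
    (0 ≤ 2 * (((η.parts.sup - 1) / 2 : ℕ) : ℚ)
        + (1 / 2 : ℚ) * ((∑ i ∈ Finset.Icc 1 η.parts.sup, (dualPart η i : ℚ) ^ 2)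
            - (oddCount η : ℚ))
        - (n : ℚ) - 2 * ((n : ℚ) - 1)) ∧
    (2 * (((η.parts.sup - 1) / 2 : ℕ) : ℚ)
        + (1 / 2 : ℚ) * ((∑ i ∈ Finset.Icc 1 η.parts.sup, (dualPart η i : ℚ) ^ 2)
            - (oddCount η : ℚ))
        - (n : ℚ) - 2 * ((n : ℚ) - 1) = 0 ↔
      Multiset.card η.parts = 2) := by
  by_cases hr : Multiset.card η.parts = 2
  · obtain ⟨a, b, hab⟩ := Multiset.card_eq_two.mp hr
    have hz : 2 * (((η.parts.sup - 1) / 2 : ℕ) : ℚ)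
        + (1 / 2 : ℚ) * ((∑ i ∈ Finset.Icc 1 η.parts.sup, (dualPart η i : ℚ) ^ 2)
            - (oddCount η : ℚ))
        - (n : ℚ) - 2 * ((n : ℚ) - 1) = 0 := by
      rcases le_total a b with h | h
      · exact case_two n hn η horth a b h hab
      · exact case_two n hn η horth b a h (by rw [hab]; exact Multiset.pair_comm a b)
    exact ⟨le_of_eq hz.symm, by rw [hz]; simp [hr]⟩
  · have hrne : Multiset.card η.parts ≠ 0 := by
      intro h
      have h0 : η.parts = 0 := Multiset.card_eq_zero.mp h
      have := η.parts_sum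
      rw [h0] at this
      simp at this
      omega
    have heven := card_parts_even n η horth
    have hr4 : 4 ≤ Multiset.card η.parts := by
      rcases heven with ⟨k, hk⟩
      omega
    have h1 := case_big n hn η hr4
    refine ⟨by linarith, ?_⟩
    constructor
    · intro h0
      exfalso; rw [h0] at h1; norm_num at h1
    · intro h
      exact absurd h hr
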